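/- Let K be an imaginary CM field with complex conjugation c, n ≥ 2 an integer, and a ∈ K. Let L/K be the splitting field of x^n − a/a^c. Then L/K is a soluble CM extension and there exists z in the maximal totally real subfield L^+ of L such that a ≡ z modulo n-th powers in L^×. -/

import Mathlib

open NumberField Polynomial

private lemma three_in_two {α : Type*} [Fintype α] (h2 : Fintype.card α = 2)
    {a b x : α} (hab : a ≠ b) : x = a ∨ x = b := by
  classical
  by_contra h
  push_neg at h
  have h3 : ({x, a, b} : Finset α).card = 3 := by
    rw [Finset.card_insert_of_notMem (by simp [h.1, h.2]),
      Finset.card_insert_of_notMem (by simp [hab]), Finset.card_singleton]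
  have h4 := Finset.card_le_univ ({x, a, b} : Finset α)
  rw [h3, h2] at h4
  omega

private lemma conj_comm_embedding
    {Kplus : Type} [Field Kplus] [NumberField Kplus]
    {K : Type} [Field K] [NumberField K] [Algebra Kplus K]
    (htr : ∀ v : InfinitePlace Kplus, v.IsReal)
    (him : ∀ v : InfinitePlace K, v.IsComplex)
    (hquad : Module.finrank Kplus K = 2)
    (c : K ≃ₐ[Kplus] K) (hc : c ≠ AlgEquiv.refl)
    (η : K →+* ℂ) (x : K) :
    (starRingEnd ℂ) (η x) = η (c x) := by
  classical
  haveI : FiniteDimensional Kplus K :=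
    Module.finite_of_finrank_eq_succ (n := 1) hquad
  letI : Algebra Kplus ℂ := (η.comp (algebraMap Kplus K)).toAlgebra
  have hreal : ∀ r : Kplus,
      (starRingEnd ℂ) (η (algebraMap Kplus K r)) = η (algebraMap Kplus K r) := by
    intro r
    have h := htr (InfinitePlace.mk (η.comp (algebraMap Kplus K)))
    rw [InfinitePlace.isReal_mk_iff, ComplexEmbedding.isReal_iff] at h
    have := RingHom.congr_fun h r
    rwa [ComplexEmbedding.conjugate_coe_eq] at this
  let A1 : K →ₐ[Kplus] ℂ := { toRingHom := η, commutes' := fun r => rfl }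
  let A2 : K →ₐ[Kplus] ℂ := A1.comp c.toAlgHom
  let A3 : K →ₐ[Kplus] ℂ :=
    { toRingHom := (starRingEnd ℂ).comp η, commutes' := fun r => hreal r }
  have hcard : Fintype.card (K →ₐ[Kplus] ℂ) = 2 := by
    rw [AlgHom.card]; exact hquad
  have h12 : A1 ≠ A2 := by
    intro h
    apply hc
    ext y
    exact ((η.injective (AlgHom.congr_fun h y)).symm)
  have h31 : A3 ≠ A1 := by
    intro h
    have hη : ComplexEmbedding.IsReal η := by
      rw [ComplexEmbedding.isReal_iff]
      ext y
      rw [ComplexEmbedding.conjugate_coe_eq]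
      exact AlgHom.congr_fun h y
    have := him (InfinitePlace.mk η)
    rw [← InfinitePlace.not_isReal_iff_isComplex] at this
    exact this (InfinitePlace.isReal_mk_iff.mpr hη)
  rcases three_in_two hcard (a := A1) (b := A2) h12 (x := A3) with h | h
  · exact absurd h h31
  · exact AlgHom.congr_fun h x

/-- **Making elements totally real up to `n`-th powers.**
Let `K` be an imaginary CM field with maximal totally real subfield `K⁺` and complex
conjugation `c` (the nontrivial `K⁺`-automorphism of `K`), let `n ≥ 2` and `a ∈ K`.
Let `L` be the splitting field over `K` of `x^n - a/a^c`.  Then `L/K` is a soluble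
(Galois) extension, `L` is a CM field, and there exists `z` in the maximal totally real
subfield `L⁺` of `L` with `a ≡ z mod (L^×)^n`. -/
theorem exists_totally_real_up_to_nth_powers
    (Kplus : Type) [Field Kplus] [NumberField Kplus]
    (K : Type) [Field K] [NumberField K] [Algebra Kplus K]
    (htr : ∀ v : InfinitePlace Kplus, v.IsReal)
    (him : ∀ v : InfinitePlace K, v.IsComplex)
    (hquad : Module.finrank Kplus K = 2)
    (conj : K ≃ₐ[Kplus] K) (hconj : conj ≠ AlgEquiv.refl)
    (n : ℕ) (hn : 2 ≤ n) (a : K)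
    (L : Type) [Field L] [Algebra K L]
    (hL : IsSplittingField K L (X ^ n - C (a / conj a))) :
    IsSolvable (L ≃ₐ[K] L) ∧
    (∀ v : InfinitePlace L, v.IsComplex) ∧
    ∃ F : Subfield L, (∀ w : InfinitePlace F, w.IsReal) ∧ Module.finrank F L = 2 ∧
      ∃ z ∈ F, ∃ w : L, algebraMap K L a = z * w ^ n := by
  classical
  haveI := hL
  set A : K →+* L := algebraMap K L with hA
  set d : K := a / conj a with hd
  set p : K[X] := X ^ n - C d with hp
  have hn0 : n ≠ 0 := by omega
  have hpdeg : p.degree = n := by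
    rw [hp]; exact degree_X_pow_sub_C (by omega) d
  have hpne : p ≠ 0 := by
    intro h; rw [h, degree_zero] at hpdeg; exact absurd hpdeg (by simp)
  haveI : FiniteDimensional K L := IsSplittingField.finiteDimensional L p
  haveI : NumberField L := NumberField.of_module_finite K L
  -- Part 1: solvability
  have hsolv : IsSolvable (L ≃ₐ[K] L) := by
    haveI : Group.IsSolvable p.Gal := gal_X_pow_sub_C_isSolvable n d
    let e : (L ≃ₐ[K] L) ≃* p.Gal := AlgEquiv.autCongr (IsSplittingField.algEquiv L p)
    exact solvable_of_surjective (f := e.symm.toMonoidHom) e.symm.surjective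
  -- a fixed embedding of L
  have hσa : Nonempty (L →ₐ[ℚ] ℂ) := ⟨IsAlgClosed.lift⟩
  obtain ⟨σa⟩ := hσa
  set σ₀ : L →+* ℂ := σa.toRingHom with hσ₀def
  have hKc : ∀ (τ : L →+* ℂ) (k : K), (starRingEnd ℂ) (τ (A k)) = τ (A (conj k)) :=
    fun τ k => conj_comm_embedding htr him hquad conj hconj (τ.comp A) k
  have hAinj : Function.Injective A := A.injective
  have hσinj : Function.Injective σ₀ := σ₀.injective
  have hcc : ∀ k : K, conj (conj k) = k := by
    intro k
    have h1 := hKc σ₀ k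
    have h2 := hKc σ₀ (conj k)
    apply hAinj; apply hσinj
    rw [← h2, ← h1, Complex.conj_conj]
  obtain ⟨k₀, hk₀⟩ : ∃ k₀ : K, conj k₀ ≠ k₀ := by
    by_contra h; push_neg at h
    exact hconj (AlgEquiv.ext fun k => h k)
  -- facts about roots
  have hroot_pow : ∀ β : L, β ∈ p.rootSet L → β ^ n = A d := by
    intro β hβ
    rw [mem_rootSet] at hβ
    have h := hβ.2
    rw [hp] at h
    simpa [sub_eq_zero] using h
  have habs : ∀ (τ : L →+* ℂ) (β : L), β ∈ p.rootSet L →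
      (starRingEnd ℂ) (τ β) = τ β⁻¹ := by
    intro τ β hβ
    by_cases hβ0 : β = 0
    · simp [hβ0]
    · have hβn : β ^ n = A d := hroot_pow β hβ
      have hd0 : d ≠ 0 := by
        intro h; rw [h, map_zero] at hβn
        exact hβ0 (pow_eq_zero_iff hn0 |>.mp hβn)
      have ha0 : a ≠ 0 := by
        intro h; apply hd0; rw [hd, h]; simp
      have hca0 : conj a ≠ 0 := by
        intro h; apply ha0; rw [← hcc a, h, map_zero]
      have hdd : conj d * d = 1 := by
        rw [hd, map_div₀, hcc a]
        field_simp
      have hpow : ((starRingEnd ℂ) (τ β) * τ β) ^ n = 1 := by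
        rw [mul_pow, ← map_pow, ← map_pow, hβn, hKc τ d, ← map_mul, ← map_mul, hdd,
          map_one, map_one]
      have hnormSq : ((Complex.normSq (τ β) : ℝ) : ℂ) ^ n = 1 := by
        rw [← hpow]; congr 1; rw [mul_comm, Complex.mul_conj]
      have hns : (Complex.normSq (τ β)) ^ n = 1 := by exact_mod_cast hnormSq
      have h1 : Complex.normSq (τ β) = 1 :=
        (pow_eq_one_iff_of_nonneg (Complex.normSq_nonneg _) hn0).mp hns
      have h2 : (starRingEnd ℂ) (τ β) * τ β = 1 := by
        rw [mul_comm, Complex.mul_conj, h1]; simp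
      rw [map_inv₀]
      exact eq_inv_of_mul_eq_one_left h2
  -- generation
  have hgen : ∀ (U : Subfield L), (∀ k : K, A k ∈ U) → (∀ β ∈ p.rootSet L, β ∈ U) →
      ∀ x : L, x ∈ U := by
    intro U hUK hUroot x
    have h1 : Algebra.adjoin K (p.rootSet L) = ⊤ := hL.adjoin_rootSet
    have h2 : Algebra.adjoin K (p.rootSet L) ≤ (U.toIntermediateField hUK).toSubalgebra :=
      Algebra.adjoin_le hUroot
    rw [h1] at h2
    exact h2 Algebra.mem_top
  -- construction of the conjugation
  have hstab : ∀ x : L, ∃ y : L, σ₀ y = (starRingEnd ℂ) (σ₀ x) := by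
    have hmem : ∀ x : L,
        x ∈ Subfield.comap ((starRingEnd ℂ).comp σ₀) σ₀.fieldRange ↔
          ∃ y, σ₀ y = (starRingEnd ℂ) (σ₀ x) := by
      intro x
      simp [Subfield.mem_comap, RingHom.mem_fieldRange]
    intro x
    rw [← hmem]
    exact hgen _ (fun k => (hmem _).mpr ⟨A (conj k), (hKc σ₀ k).symm⟩)
      (fun β hβ => (hmem _).mpr ⟨β⁻¹, (habs σ₀ β hβ).symm⟩) x
  choose c₀f hc₀f using hstab
  have hc₀c₀ : ∀ x, c₀f (c₀f x) = x := fun x =>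
    hσinj (by rw [hc₀f, hc₀f, Complex.conj_conj])
  have hc₀add : ∀ x y, c₀f (x + y) = c₀f x + c₀f y := fun x y =>
    hσinj (by simp only [hc₀f, map_add])
  have hc₀mul : ∀ x y, c₀f (x * y) = c₀f x * c₀f y := fun x y =>
    hσinj (by simp only [hc₀f, map_mul])
  have hc₀K : ∀ k : K, c₀f (A k) = A (conj k) := fun k =>
    hσinj (by rw [hc₀f, hKc σ₀ k])
  have hc₀root : ∀ β ∈ p.rootSet L, c₀f β = β⁻¹ := fun β hβ =>
    hσinj (by rw [hc₀f, habs σ₀ β hβ])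
  have hc₀ne : c₀f (A k₀) ≠ A k₀ := by
    rw [hc₀K]; exact fun h => hk₀ (hAinj h)
  let c₀ : L ≃ₐ[ℚ] L :=
    { toFun := c₀f, invFun := c₀f, left_inv := hc₀c₀, right_inv := hc₀c₀,
      map_add' := hc₀add, map_mul' := hc₀mul,
      commutes' := by
        intro q
        apply hσinj
        rw [hc₀f, eq_ratCast (algebraMap ℚ L) q, map_ratCast σ₀, map_ratCast] }
  have hc₀coe : ∀ x, c₀ x = c₀f x := fun _ => rfl
  -- the key commutation with every embedding
  have hkey : ∀ (τ : L →+* ℂ) (x : L), (starRingEnd ℂ) (τ x) = τ (c₀f x) := by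
    intro τ
    let U : Subfield L :=
      { carrier := {x | (starRingEnd ℂ) (τ x) = τ (c₀f x)}
        zero_mem' := by
          simp only [Set.mem_setOf_eq, map_zero]
          rw [show c₀f 0 = 0 from map_zero c₀, map_zero]
        one_mem' := by
          simp only [Set.mem_setOf_eq, map_one]
          rw [show c₀f 1 = 1 from map_one c₀, map_one]
        add_mem' := by
          intro x y hx hy
          simp only [Set.mem_setOf_eq] at *
          rw [map_add, map_add, hx, hy, hc₀add, map_add]
        neg_mem' := by
          intro x hx
          simp only [Set.mem_setOf_eq] at *
          rw [map_neg, map_neg, hx, show c₀f (-x) = -(c₀f x) from map_neg c₀ x, map_neg]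
        mul_mem' := by
          intro x y hx hy
          simp only [Set.mem_setOf_eq] at *
          rw [map_mul, map_mul, hx, hy, hc₀mul, map_mul]
        inv_mem' := by
          intro x hx
          simp only [Set.mem_setOf_eq] at *
          rw [map_inv₀, map_inv₀, hx, show c₀f x⁻¹ = (c₀f x)⁻¹ from map_inv₀ c₀ x, map_inv₀] }
    have := hgen U
      (fun k => by
        show (starRingEnd ℂ) (τ (A k)) = τ (c₀f (A k))
        rw [hKc τ k, hc₀K])
      (fun β hβ => by
        show (starRingEnd ℂ) (τ β) = τ (c₀f β)
        rw [habs τ β hβ, hc₀root β hβ])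
    exact this
  -- Part 2: L is totally imaginary
  have hLim : ∀ v : InfinitePlace L, v.IsComplex := by
    intro v
    rw [← InfinitePlace.not_isReal_iff_isComplex]
    rintro ⟨φ, hφ, -⟩
    rw [ComplexEmbedding.isReal_iff] at hφ
    have h1 := hkey φ (A k₀)
    rw [hc₀K] at h1
    have h2 := RingHom.congr_fun hφ (A k₀)
    rw [ComplexEmbedding.conjugate_coe_eq] at h2
    exact hk₀ (hAinj (φ.injective (h1.symm.trans h2)))
  -- the fixed field
  have hc₀sq : c₀ * c₀ = 1 := by
    apply AlgEquiv.ext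
    intro x
    exact hc₀c₀ x
  have hc₀one : c₀ ≠ 1 := by
    intro h
    apply hc₀ne
    rw [← hc₀coe, h]
    rfl
  haveI : Fact (Nat.Prime 2) := ⟨Nat.prime_two⟩
  have hord : orderOf c₀ = 2 := orderOf_eq_prime (by rw [sq]; exact hc₀sq) hc₀one
  set H : Subgroup (L ≃ₐ[ℚ] L) := Subgroup.zpowers c₀ with hH
  haveI : FaithfulSMul H L :=
    ⟨fun {g₁ g₂} h => Subtype.ext (AlgEquiv.ext fun x => h x)⟩
  set F : Subfield L := FixedPoints.subfield H L with hF
  have hFrank : Module.finrank F L = 2 := by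
    rw [hF, FixedPoints.finrank_eq_card H L, ← Nat.card_eq_fintype_card, hH,
      Nat.card_zpowers]
    exact hord
  have hzmem : ∀ x : L, c₀f x = x → x ∈ F := by
    intro x hx
    intro g
    obtain ⟨g, hg⟩ := g
    obtain ⟨k, rfl⟩ := Subgroup.mem_zpowers_iff.mp hg
    have hst : c₀ ∈ MulAction.stabilizer (L ≃ₐ[ℚ] L) x := hx
    have := Subgroup.zpow_mem _ hst k
    exact this
  have hmemF : ∀ x : L, x ∈ F → c₀f x = x := by
    intro x hx
    exact hx ⟨c₀, Subgroup.mem_zpowers c₀⟩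
  -- F is totally real
  have hFreal : ∀ w : InfinitePlace F, w.IsReal := by
    intro w
    obtain ⟨φ, hφ⟩ := w.2
    have hw : w = InfinitePlace.mk φ := Subtype.ext hφ.symm
    rw [hw, InfinitePlace.isReal_mk_iff, ComplexEmbedding.isReal_iff]
    ext x
    rw [ComplexEmbedding.conjugate_coe_eq]
    letI : Algebra F ℂ := φ.toAlgebra
    haveI : IsScalarTower ℚ F L := IsScalarTower.of_algebraMap_eq fun q => by
      rw [eq_ratCast (algebraMap ℚ L) q, ← RingHom.comp_apply,
        eq_ratCast ((algebraMap F L).comp (algebraMap ℚ F))]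
    haveI : FiniteDimensional F L := FiniteDimensional.right ℚ F L
    haveI : Module.IsTorsionFree F L :=
      Module.isTorsionFree_iff_algebraMap_injective.mpr (algebraMap F L).injective
    haveI : Module.IsTorsionFree F ℂ :=
      Module.isTorsionFree_iff_algebraMap_injective.mpr (algebraMap F ℂ).injective
    let ψ : L →ₐ[F] ℂ := IsAlgClosed.lift
    have hψx : ψ (algebraMap F L x) = φ x := ψ.commutes x
    have hax : algebraMap F L x = (x : L) := rfl
    have h1 := hkey ψ.toRingHom (x : L)
    have h2 : c₀f (x : L) = (x : L) := hmemF _ x.2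
    calc (starRingEnd ℂ) (φ x) = (starRingEnd ℂ) (ψ (x : L)) := by rw [← hψx, hax]
      _ = ψ (c₀f (x : L)) := h1
      _ = ψ (x : L) := by rw [h2]
      _ = φ x := by rw [← hax, hψx]
  refine ⟨hsolv, hLim, F, hFreal, hFrank, ?_⟩
  by_cases ha0 : a = 0
  · exact ⟨0, F.zero_mem, 0, by rw [ha0, map_zero, zero_mul]⟩
  · have hca0 : conj a ≠ 0 := fun h => ha0 (by rw [← hcc a, h, map_zero])
    have hd0 : d ≠ 0 := by rw [hd]; exact div_ne_zero ha0 hca0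
    obtain ⟨β, hβroot⟩ : ∃ β : L, β ∈ p.rootSet L := by
      obtain ⟨x, hx⟩ := (IsSplittingField.splits L p).exists_eval_eq_zero
        (by rw [degree_map, hpdeg]; exact_mod_cast hn0)
      exact ⟨x, (mem_rootSet).mpr ⟨hpne, by rwa [aeval_def, eval₂_eq_eval_map]⟩⟩
    have hβn : β ^ n = A d := hroot_pow β hβroot
    have hβ0 : β ≠ 0 := by
      intro h
      apply hd0
      apply hAinj
      rw [map_zero, ← hβn, h, zero_pow hn0]
    have hc₀β : c₀f β = β⁻¹ := hc₀root β hβroot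
    obtain ⟨t, hb⟩ : ∃ t : L, t + β * c₀f t ≠ 0 := by
      by_contra h; push_neg at h
      have h1 := h 1
      rw [show c₀f 1 = 1 from map_one c₀, mul_one] at h1
      have hβ1 : β = -1 := by linear_combination h1
      apply hc₀ne
      have h2 := h (A k₀)
      rw [hβ1] at h2
      linear_combination -h2
    set b : L := t + β * c₀f t with hbdef
    have hc₀b : c₀f b = β⁻¹ * b := by
      rw [hbdef, hc₀add, hc₀mul, hc₀c₀, hc₀β]
      field_simp
      ring
    have hc₀b0 : c₀f b ≠ 0 := by rw [hc₀b]; exact mul_ne_zero (inv_ne_zero hβ0) hb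
    have hAa : A a ≠ 0 := fun h => ha0 (hAinj (by rw [map_zero, h]))
    have hAca : A (conj a) ≠ 0 := fun h => hca0 (hAinj (by rw [map_zero, h]))
    have hβn' : β ^ n = A a / A (conj a) := by rw [hβn, hd, map_div₀]
    refine ⟨A a * (c₀f b) ^ n, ?_, (c₀f b)⁻¹, ?_⟩
    · apply hzmem
      have hpowc : c₀f ((c₀f b) ^ n) = b ^ n := by
        rw [show c₀f ((c₀f b) ^ n) = (c₀f (c₀f b)) ^ n from map_pow c₀ (c₀f b) n, hc₀c₀]
      rw [hc₀mul, hc₀K, hpowc, hc₀b, mul_pow, inv_pow, hβn']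
      field_simp
    · rw [inv_pow, mul_assoc, mul_inv_cancel₀ (pow_ne_zero n hc₀b0), mul_one]
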